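/- For positive integers N_i, N_j, N_k, M, the constraint M·ω_ik/N_j = M·ω_jk/N_i = ω_ij/N_k (with r_i, r_j, r_k and ω_ij, ω_ik, ω_jk as defined) holds if and only if N_i = N_j = N_k and M = 1 or M = 2. Moreover, in the case M = 1 one has r_i·N_i = r_j·N_j = r_k·N_k = 3/4 and ω_ij = ω_ik = ω_jk = −1/2, while in the case M = 2 one has r_i·N_i = r_j·N_j = 3/5, r_k·N_k = 1/2, ω_ij = −1/5 and ω_ik = ω_jk = −1/10. -/

import Mathlib

set_option maxHeartbeats 2000000

lemma aux_pm (p m : ℕ) (hm : 0 < m) (hp1 : 1 ≤ p) (hp12 : p ≤ 12)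
    (hu : p^3 + 6*p^2 + 12*m^4*p = 2*m^2*p^2 + 66*m^2*p + 36*m^4) :
    (p = 6 ∧ m = 1) ∨ (p = 12 ∧ m = 2) := by
  have hm2 : 1 ≤ m^2 := Nat.one_le_pow _ _ hm
  have hm4 : 1 ≤ m^4 := Nat.one_le_pow _ _ hm
  have hmle : m ≤ 4 := by
    by_contra hc
    push_neg at hc
    have hc' : 5 ≤ m := hc
    have h25 : 25*m^2 ≤ m^4 := by nlinarith [Nat.mul_le_mul hc' hc']
    interval_cases p <;> norm_num at hu <;> linarith
  interval_cases p <;> interval_cases m <;> revert hu <;> decide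

lemma aux_p12 (p m : ℕ) (hm : 0 < m)
    (hu : p^3 + 6*p^2 + 12*m^4*p = 2*m^2*p^2 + 66*m^2*p + 36*m^4) :
    p ≤ 12 := by
  by_contra hc
  push_neg at hc
  have hz : (p:ℤ)^3 + 6*(p:ℤ)^2 + 12*(m:ℤ)^4*p = 2*(m:ℤ)^2*p^2 + 66*(m:ℤ)^2*p + 36*(m:ℤ)^4 := by
    exact_mod_cast hu
  have hpz : (13:ℤ) ≤ p := by exact_mod_cast hc
  have key : (2*(12*(p:ℤ)-36)*(m:ℤ)^2 - (2*(p:ℤ)^2+66*p))^2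
      = 4*(p:ℤ)^2*(1305 + 30*(p:ℤ) - 11*(p:ℤ)^2) := by
    linear_combination (4*(12*(p:ℤ)-36)) * hz
  have hneg : 1305 + 30*(p:ℤ) - 11*(p:ℤ)^2 < 0 := by nlinarith
  nlinarith [sq_nonneg (2*(12*(p:ℤ)-36)*(m:ℤ)^2 - (2*(p:ℤ)^2+66*p)), sq_nonneg (p:ℤ),
    mul_pos (mul_pos (by linarith : (0:ℤ) < 4) (by nlinarith : (0:ℤ) < (p:ℤ)^2)) (by linarith : (0:ℤ) < -(1305 + 30*(p:ℤ) - 11*(p:ℤ)^2))]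

lemma key_nt (a c m : ℕ) (ha : 0 < a) (hc : 0 < c) (hm : 0 < m)
    (h : 6*m*a^3 + 6*a^2*c + 2*m^3*a*c^2 = 2*m^2*a^2*c + 11*m*a*c^2 + m^2*c^3) :
    a = c ∧ (m = 1 ∨ m = 2) := by
  obtain ⟨p, hp⟩ := Nat.gcd_dvd_left (6*m*a) c
  obtain ⟨q, hq⟩ := Nat.gcd_dvd_right (6*m*a) c
  set d := Nat.gcd (6*m*a) c with hd
  have hdpos : 0 < d := Nat.gcd_pos_of_pos_right _ hc
  have hppos : 0 < p := Nat.pos_of_ne_zero (fun h0 => by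
    rw [h0, Nat.mul_zero] at hp
    exact (by positivity : 0 < 6*m*a).ne' hp)
  have hqpos : 0 < q := Nat.pos_of_ne_zero (fun h0 => by
    rw [h0, Nat.mul_zero] at hq
    exact hc.ne' hq)
  have hcop : Nat.Coprime p q := by
    have h1 : p = (6*m*a) / d := by rw [hp, Nat.mul_div_cancel_left _ hdpos]
    have h2 : q = c / d := by rw [hq, Nat.mul_div_cancel_left _ hdpos]
    rw [h1, h2]
    exact Nat.coprime_div_gcd_div_gcd (by omega)
  have hp' : ((6*m*a : ℕ) : ℤ) = (d : ℤ) * p := by exact_mod_cast hp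
  have hq' : ((c : ℕ) : ℤ) = (d : ℤ) * q := by exact_mod_cast hq
  have hℤ : 6*(m:ℤ)*a^3 + 6*(a:ℤ)^2*c + 2*(m:ℤ)^3*a*c^2
      = 2*(m:ℤ)^2*a^2*c + 11*(m:ℤ)*a*c^2 + (m:ℤ)^2*c^3 := by exact_mod_cast h
  have hz' : (d:ℤ)^3 * ((p:ℤ)^3 + 6*(p:ℤ)^2*q + 12*(m:ℤ)^4*p*q^2)
      = (d:ℤ)^3 * (2*(m:ℤ)^2*p^2*q + 66*(m:ℤ)^2*p*q^2 + 36*(m:ℤ)^4*q^3) := by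
    calc (d:ℤ)^3 * ((p:ℤ)^3 + 6*(p:ℤ)^2*q + 12*(m:ℤ)^4*p*q^2)
        = ((d:ℤ)*p)^3 + 6*((d:ℤ)*p)^2*((d:ℤ)*q) + 12*(m:ℤ)^4*((d:ℤ)*p)*((d:ℤ)*q)^2 := by ring
      _ = ((6*m*a : ℕ) : ℤ)^3 + 6*((6*m*a : ℕ) : ℤ)^2*(c:ℤ) + 12*(m:ℤ)^4*((6*m*a : ℕ) : ℤ)*(c:ℤ)^2 := by
          rw [hp', hq']
      _ = 36*(m:ℤ)^2 * (6*(m:ℤ)*a^3 + 6*(a:ℤ)^2*c + 2*(m:ℤ)^3*a*c^2) := by push_cast; ring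
      _ = 36*(m:ℤ)^2 * (2*(m:ℤ)^2*a^2*c + 11*(m:ℤ)*a*c^2 + (m:ℤ)^2*c^3) := by rw [hℤ]
      _ = 2*(m:ℤ)^2*((6*m*a : ℕ) : ℤ)^2*(c:ℤ) + 66*(m:ℤ)^2*((6*m*a : ℕ) : ℤ)*(c:ℤ)^2 + 36*(m:ℤ)^4*(c:ℤ)^3 := by
          push_cast; ring
      _ = 2*(m:ℤ)^2*((d:ℤ)*p)^2*((d:ℤ)*q) + 66*(m:ℤ)^2*((d:ℤ)*p)*((d:ℤ)*q)^2 + 36*(m:ℤ)^4*((d:ℤ)*q)^3 := by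
          rw [hp', hq']
      _ = (d:ℤ)^3 * (2*(m:ℤ)^2*p^2*q + 66*(m:ℤ)^2*p*q^2 + 36*(m:ℤ)^4*q^3) := by ring
  have hz : (p:ℤ)^3 + 6*(p:ℤ)^2*q + 12*(m:ℤ)^4*p*q^2
      = 2*(m:ℤ)^2*p^2*q + 66*(m:ℤ)^2*p*q^2 + 36*(m:ℤ)^4*q^3 :=
    mul_left_cancel₀ (by positivity) hz'
  have hdvd : (q:ℤ) ∣ (p:ℤ)^3 := ⟨2*(m:ℤ)^2*p^2 + 66*(m:ℤ)^2*p*q + 36*(m:ℤ)^4*q^2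
      - 6*(p:ℤ)^2 - 12*(m:ℤ)^4*p*q, by linear_combination hz⟩
  have hdvdn : q ∣ p^3 := by exact_mod_cast hdvd
  have hq1 : q = 1 := Nat.dvd_one.mp ((Nat.Coprime.pow_right 3 hcop.symm) ▸ Nat.dvd_gcd dvd_rfl hdvdn)
  subst hq1
  rw [Nat.mul_one] at hq
  rw [← hq] at hp
  -- hp : 6*m*a = c*p ; equation in p, m over ℕ
  have hu : p^3 + 6*p^2 + 12*m^4*p = 2*m^2*p^2 + 66*m^2*p + 36*m^4 := by
    have := hz
    push_cast at this
    exact_mod_cast by linarith [this] 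
  have hp12 := aux_p12 p m hm hu
  rcases aux_pm p m hm hppos hp12 hu with ⟨hp6, hm1⟩ | ⟨hpp, hm2⟩
  · subst hp6 hm1; constructor
    · omega
    · left; rfl
  · subst hpp hm2; constructor
    · omega
    · right; rfl




/-- **First supersymmetry demand for a single building block of the third type.**
With `rᵢ = 3/(2Nᵢ + Nⱼ + M·Nₖ)`, `rⱼ = 3/(Nᵢ + 2Nⱼ + M·Nₖ)`,
`rₖ = 3/(M(Nᵢ + Nⱼ) + 2Nₖ)` and `ω_ij = 1 − rᵢNᵢ − rⱼNⱼ`, etc., the constraint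
`M·ω_ik/Nⱼ = M·ω_jk/Nᵢ = ω_ij/Nₖ` holds iff `Nᵢ = Nⱼ = Nₖ` and `M = 1 ∨ M = 2`;
moreover in case `M = 1` one has `rᵢNᵢ = rⱼNⱼ = rₖNₖ = 3/4` and all `ω = −1/2`,
while in case `M = 2` one has `rᵢNᵢ = rⱼNⱼ = 3/5`, `rₖNₖ = 1/2`, `ω_ij = −1/5` and
`ω_ik = ω_jk = −1/10`. -/
theorem third_type_first_susy_demand
    (Ni Nj Nk M : ℕ) (hi : 0 < Ni) (hj : 0 < Nj) (hk : 0 < Nk) (hM : 0 < M)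
    (ri rj rk ωij ωik ωjk : ℚ)
    (hri : ri = 3 / (2 * Ni + Nj + M * Nk))
    (hrj : rj = 3 / ((Ni : ℚ) + 2 * Nj + M * Nk))
    (hrk : rk = 3 / (M * ((Ni : ℚ) + Nj) + 2 * Nk))
    (hωij : ωij = 1 - ri * Ni - rj * Nj)
    (hωik : ωik = 1 - ri * Ni - rk * Nk)
    (hωjk : ωjk = 1 - rj * Nj - rk * Nk) :
    ((M * ωik / Nj = M * ωjk / Ni ∧ M * ωjk / Ni = ωij / Nk) ↔
      (Ni = Nj ∧ Nj = Nk ∧ (M = 1 ∨ M = 2))) ∧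
    ((M * ωik / Nj = M * ωjk / Ni ∧ M * ωjk / Ni = ωij / Nk) → M = 1 →
      (ri * Ni = 3 / 4 ∧ rj * Nj = 3 / 4 ∧ rk * Nk = 3 / 4 ∧
        ωij = -(1 / 2) ∧ ωik = -(1 / 2) ∧ ωjk = -(1 / 2))) ∧
    ((M * ωik / Nj = M * ωjk / Ni ∧ M * ωjk / Ni = ωij / Nk) → M = 2 →
      (ri * Ni = 3 / 5 ∧ rj * Nj = 3 / 5 ∧ rk * Nk = 1 / 2 ∧
        ωij = -(1 / 5) ∧ ωik = -(1 / 10) ∧ ωjk = -(1 / 10))) := by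
  have hA : (0:ℚ) < Ni := by exact_mod_cast hi
  have hB : (0:ℚ) < Nj := by exact_mod_cast hj
  have hC : (0:ℚ) < Nk := by exact_mod_cast hk
  have hMq : (0:ℚ) < M := by exact_mod_cast hM
  have hD1 : (2*(Ni:ℚ) + Nj + M*Nk) ≠ 0 := by nlinarith [mul_pos hMq hC]
  have hD2 : ((Ni:ℚ) + 2*Nj + M*Nk) ≠ 0 := by nlinarith [mul_pos hMq hC]
  have hD3 : ((M:ℚ)*((Ni:ℚ)+Nj) + 2*Nk) ≠ 0 := by nlinarith [mul_pos hMq (by linarith : (0:ℚ) < (Ni:ℚ)+Nj)]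
  have wij : ωij * ((2*(Ni:ℚ) + Nj + M*Nk)*((Ni:ℚ) + 2*Nj + M*Nk)*((M:ℚ)*((Ni:ℚ)+Nj) + 2*Nk))
      = (2*(Ni:ℚ) + Nj + M*Nk)*((Ni:ℚ) + 2*Nj + M*Nk)*((M:ℚ)*((Ni:ℚ)+Nj) + 2*Nk)
        - 3*Ni*(((Ni:ℚ) + 2*Nj + M*Nk)*((M:ℚ)*((Ni:ℚ)+Nj) + 2*Nk))
        - 3*Nj*((2*(Ni:ℚ) + Nj + M*Nk)*((M:ℚ)*((Ni:ℚ)+Nj) + 2*Nk)) := by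
    rw [hωij, hri, hrj]; field_simp
  have wik : ωik * ((2*(Ni:ℚ) + Nj + M*Nk)*((Ni:ℚ) + 2*Nj + M*Nk)*((M:ℚ)*((Ni:ℚ)+Nj) + 2*Nk))
      = (2*(Ni:ℚ) + Nj + M*Nk)*((Ni:ℚ) + 2*Nj + M*Nk)*((M:ℚ)*((Ni:ℚ)+Nj) + 2*Nk)
        - 3*Ni*(((Ni:ℚ) + 2*Nj + M*Nk)*((M:ℚ)*((Ni:ℚ)+Nj) + 2*Nk))
        - 3*Nk*((2*(Ni:ℚ) + Nj + M*Nk)*((Ni:ℚ) + 2*Nj + M*Nk)) := by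
    rw [hωik, hri, hrk]; field_simp
  have wjk : ωjk * ((2*(Ni:ℚ) + Nj + M*Nk)*((Ni:ℚ) + 2*Nj + M*Nk)*((M:ℚ)*((Ni:ℚ)+Nj) + 2*Nk))
      = (2*(Ni:ℚ) + Nj + M*Nk)*((Ni:ℚ) + 2*Nj + M*Nk)*((M:ℚ)*((Ni:ℚ)+Nj) + 2*Nk)
        - 3*Nj*((2*(Ni:ℚ) + Nj + M*Nk)*((M:ℚ)*((Ni:ℚ)+Nj) + 2*Nk))
        - 3*Nk*((2*(Ni:ℚ) + Nj + M*Nk)*((Ni:ℚ) + 2*Nj + M*Nk)) := by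
    rw [hωjk, hrj, hrk]; field_simp
  have main : (↑M * ωik / ↑Nj = ↑M * ωjk / ↑Ni ∧ ↑M * ωjk / ↑Ni = ωij / ↑Nk) ↔
      (Ni = Nj ∧ Nj = Nk ∧ (M = 1 ∨ M = 2)) := by
    constructor
    · rintro ⟨h1, h2⟩
      have e2 : (M:ℚ) * ωjk * Nk = ωij * Ni := (div_eq_div_iff hA.ne' hC.ne').mp h2
      have e3 : (M:ℚ) * ωik * Nk = ωij * Nj := (div_eq_div_iff hB.ne' hC.ne').mp (h1.trans h2)
      have key1 : ((Nj:ℚ) - Ni) * (4*(Nk:ℚ)^3*M^2 + 6*(Nj:ℚ)*Nk^2*M + 2*(Nj:ℚ)*Nk^2*M^3 + 2*(Nj:ℚ)^2*Nk + 3*(Nj:ℚ)^2*Nk*M^2 + (Nj:ℚ)^3*M + 6*(Ni:ℚ)*Nk^2*M + 2*(Ni:ℚ)*Nk^2*M^3 + 14*(Ni:ℚ)*Nj*Nk + 6*(Ni:ℚ)*Nj*Nk*M^2 + 8*(Ni:ℚ)*Nj^2*M + 2*(Ni:ℚ)^2*Nk + 3*(Ni:ℚ)^2*Nk*M^2 +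 8*(Ni:ℚ)^2*Nj*M + (Ni:ℚ)^3*M) = 0 := by
        linear_combination ((2*(Ni:ℚ) + Nj + M*Nk)*((Ni:ℚ) + 2*Nj + M*Nk)*((M:ℚ)*((Ni:ℚ)+Nj) + 2*Nk))*e3 - ((2*(Ni:ℚ) + Nj + M*Nk)*((Ni:ℚ) + 2*Nj + M*Nk)*((M:ℚ)*((Ni:ℚ)+Nj) + 2*Nk))*e2 - ((M:ℚ)*Nk)*wik + (Nj:ℚ)*wij + ((M:ℚ)*Nk)*wjk - (Ni:ℚ)*wij
      have hQ2pos : (0:ℚ) < (4*(Nk:ℚ)^3*M^2 + 6*(Nj:ℚ)*Nk^2*M + 2*(Nj:ℚ)*Nk^2*M^3 + 2*(Nj:ℚ)^2*Nk + 3*(Nj:ℚ)^2*Nk*M^2 + (Nj:ℚ)^3*M + 6*(Ni:ℚ)*Nk^2*M + 2*(Ni:ℚ)*Nk^2*M^3 + 14*(Ni:ℚ)*Nj*Nk + 6*(Ni:ℚ)*Nj*Nk*M^2 + 8*(Ni:ℚ)*Nj^2*M + 2*(Ni:ℚ)^2*Nk + 3*(Ni:ℚ)^2*Nk*M^2 +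 8*(Ni:ℚ)^2*Nj*M + (Ni:ℚ)^3*M) := by
        have t1 : (0:ℚ) < (Ni:ℚ)^3*M := mul_pos (pow_pos hA 3) hMq
        have t2 : (0:ℚ) ≤ 4*(Nk:ℚ)^3*M^2 + 6*(Nj:ℚ)*Nk^2*M + 2*(Nj:ℚ)*Nk^2*M^3 + 2*(Nj:ℚ)^2*Nk + 3*(Nj:ℚ)^2*Nk*M^2 + (Nj:ℚ)^3*M + 6*(Ni:ℚ)*Nk^2*M + 2*(Ni:ℚ)*Nk^2*M^3 + 14*(Ni:ℚ)*Nj*Nk + 6*(Ni:ℚ)*Nj*Nk*M^2 + 8*(Ni:ℚ)*Nj^2*M + 2*(Ni:ℚ)^2*Nk + 3*(Ni:ℚ)^2*Nk*M^2 + 8*(Ni:ℚ)^2*Nj*M := by positivity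
        linarith
      have hBA : (Nj:ℚ) = Ni := by
        rcases mul_eq_zero.mp key1 with h | h
        · linarith [sub_eq_zero.mp h]
        · exact absurd h hQ2pos.ne'
      have hNji : Ni = Nj := by exact_mod_cast hBA.symm
      subst hNji
      have key2 : (3*(Ni:ℚ) + M*Nk) * (6*(M:ℚ)*Ni^3 + 6*(Ni:ℚ)^2*Nk + 2*(M:ℚ)^3*Ni*Nk^2
          - (2*(M:ℚ)^2*Ni^2*Nk + 11*(M:ℚ)*Ni*Nk^2 + (M:ℚ)^2*Nk^3)) = 0 := by
        linear_combination ((2*(Ni:ℚ) + Ni + M*Nk)*((Ni:ℚ) + 2*Ni + M*Nk)*((M:ℚ)*((Ni:ℚ)+Ni) + 2*Nk))*e2 - ((M:ℚ)*Nk)*wjk + (Ni:ℚ)*wij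
      have hQ4 : 6*(M:ℚ)*Ni^3 + 6*(Ni:ℚ)^2*Nk + 2*(M:ℚ)^3*Ni*Nk^2
          = 2*(M:ℚ)^2*Ni^2*Nk + 11*(M:ℚ)*Ni*Nk^2 + (M:ℚ)^2*Nk^3 := by
        rcases mul_eq_zero.mp key2 with h | h
        · exfalso; nlinarith [mul_pos hMq hC]
        · linarith [sub_eq_zero.mp h]
      have hNat : 6*M*Ni^3 + 6*Ni^2*Nk + 2*M^3*Ni*Nk^2
          = 2*M^2*Ni^2*Nk + 11*M*Ni*Nk^2 + M^2*Nk^3 := by exact_mod_cast hQ4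
      obtain ⟨hik, hm12⟩ := key_nt Ni Nk M hi hk hM hNat
      exact ⟨rfl, hik, hm12⟩
    · rintro ⟨rfl, rfl, hm12⟩
      rcases hm12 with rfl | rfl
      · have vik : ωik = -(1/2) := by rw [hωik, hri, hrk]; push_cast; field_simp; ring
        have vjk : ωjk = -(1/2) := by rw [hωjk, hrj, hrk]; push_cast; field_simp; ring
        have vij : ωij = -(1/2) := by rw [hωij, hri, hrj]; push_cast; field_simp; ring
        rw [vik, vjk, vij]
        norm_num
      · have vik : ωik = -(1/10) := by rw [hωik, hri, hrk]; push_cast; field_simp; ring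
        have vjk : ωjk = -(1/10) := by rw [hωjk, hrj, hrk]; push_cast; field_simp; ring
        have vij : ωij = -(1/5) := by rw [hωij, hri, hrj]; push_cast; field_simp; ring
        rw [vik, vjk, vij]
        constructor
        · rfl
        · push_cast; ring
  refine ⟨main, ?_, ?_⟩
  · intro hcon h1
    obtain ⟨rfl, rfl, -⟩ := main.mp hcon
    subst h1
    refine ⟨?_, ?_, ?_, ?_, ?_, ?_⟩
    · rw [hri]; push_cast; field_simp; ring
    · rw [hrj]; push_cast; field_simp; ring
    · rw [hrk]; push_cast; field_simp; ring
    · rw [hωij, hri, hrj]; push_cast; field_simp; ring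
    · rw [hωik, hri, hrk]; push_cast; field_simp; ring
    · rw [hωjk, hrj, hrk]; push_cast; field_simp; ring
  · intro hcon h2
    obtain ⟨rfl, rfl, -⟩ := main.mp hcon
    subst h2
    refine ⟨?_, ?_, ?_, ?_, ?_, ?_⟩
    · rw [hri]; push_cast; field_simp; ring
    · rw [hrj]; push_cast; field_simp; ring
    · rw [hrk]; push_cast; field_simp; ring
    · rw [hωij, hri, hrj]; push_cast; field_simp; ring
    · rw [hωik, hri, hrk]; push_cast; field_simp; ring
    · rw [hωjk, hrj, hrk]; push_cast; field_simp; ring
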